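/- Let Δ be a connected graph, ℓ : D(Δ) → N a voltage assignment with N Abelian, G ≤ Aut(Δ) with an action on N making ℓ G-equivariant, and Γ the lift of Δ. Suppose every triangle in Δ has voltage 0, and let M ≤ N be the subgroup generated by voltages of all closed walks. Fix a vertex v, and for each g ∈ G choose a path P_g from v^g to v with voltage λ(g). Then the stabilizer in G ⋉ N of the connected component of Γ containing (v, 0) equals H = {(g, λ(g) + m) : g ∈ G, m ∈ M}, and H is a group extension of G by M (i.e. {1} × M is a normal subgroup of H with quotient isomorphic to G). -/

import Mathlib

/-- The lift of a graph `Δ` with respect to a voltage assignment `ℓ : D(Δ) → N`, with `N`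
an additive (Abelian) group. -/
def liftGraphA {V N : Type*} [AddCommGroup N] (Δ : SimpleGraph V) (ℓ : V → V → N)
    (hℓ : ∀ u v, Δ.Adj u v → ℓ u v = - ℓ v u) : SimpleGraph (V × N) where
  Adj p q := Δ.Adj p.1 q.1 ∧ ℓ p.1 q.1 = p.2 - q.2
  symm := by
    constructor
    rintro ⟨u, m⟩ ⟨v, n⟩ ⟨h1, h2⟩
    exact ⟨h1.symm, by rw [hℓ v u h1.symm, h2]; abel⟩
  loopless := by constructor; rintro ⟨u, m⟩ ⟨h, -⟩; exact Δ.irrefl h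

namespace VoltAux
open SimpleGraph

variable {V N : Type*} [AddCommGroup N]

/-- The voltage of a walk: the sum of the voltages of its darts. -/
def wvolt (ℓ : V → V → N) {Δ : SimpleGraph V} : {u w : V} → Δ.Walk u w → N
  | _, _, SimpleGraph.Walk.nil => 0
  | u, _, SimpleGraph.Walk.cons (v := x) _ p => ℓ u x + wvolt ℓ p

@[simp] lemma wvolt_nil (ℓ : V → V → N) {Δ : SimpleGraph V} {u : V} :
    wvolt ℓ (Walk.nil : Δ.Walk u u) = 0 := rfl

@[simp] lemma wvolt_cons (ℓ : V → V → N) {Δ : SimpleGraph V} {u x w : V}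
    (h : Δ.Adj u x) (p : Δ.Walk x w) :
    wvolt ℓ (Walk.cons h p) = ℓ u x + wvolt ℓ p := rfl

@[simp] lemma wvolt_append (ℓ : V → V → N) {Δ : SimpleGraph V} {u x w : V}
    (p : Δ.Walk u x) (q : Δ.Walk x w) :
    wvolt ℓ (p.append q) = wvolt ℓ p + wvolt ℓ q := by
  induction p with
  | nil => simp
  | cons h p ih => simp [ih, add_assoc]

lemma wvolt_reverse (ℓ : V → V → N) {Δ : SimpleGraph V}
    (hℓ : ∀ u v, Δ.Adj u v → ℓ u v = - ℓ v u) {u w : V} (p : Δ.Walk u w) :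
    wvolt ℓ p.reverse = - wvolt ℓ p := by
  induction p with
  | nil => simp
  | cons h p ih =>
      simp [Walk.reverse_cons, ih, hℓ _ _ h.symm]

@[simp] lemma wvolt_copy (ℓ : V → V → N) {Δ : SimpleGraph V} {u w u' w' : V}
    (p : Δ.Walk u w) (hu : u = u') (hw : w = w') :
    wvolt ℓ (p.copy hu hw) = wvolt ℓ p := by
  subst hu; subst hw; rfl

lemma wvolt_map (ℓ : V → V → N) {Δ : SimpleGraph V} (f : Δ →g Δ) (φ : N ≃+ N)
    (hf : ∀ a b, Δ.Adj a b → ℓ (f a) (f b) = φ (ℓ a b)) {u w : V} (p : Δ.Walk u w) :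
    wvolt ℓ (p.map f) = φ (wvolt ℓ p) := by
  induction p with
  | nil => simp
  | cons h p ih => simp [ih, hf _ _ h]

lemma finToWalk (ℓ : V → V → N) {Δ : SimpleGraph V} :
    ∀ (k : ℕ) (c : Fin (k + 1) → V),
    (∀ j : Fin k, Δ.Adj (c j.castSucc) (c j.succ)) →
    ∃ p : Δ.Walk (c 0) (c (Fin.last k)),
      wvolt ℓ p = ∑ j : Fin k, ℓ (c j.castSucc) (c j.succ) := by
  intro k
  induction k with
  | zero => intro c _; exact ⟨Walk.nil, by simp⟩
  | succ k ih =>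
      intro c hadj
      obtain ⟨p, hp⟩ := ih (fun j => c j.succ) (fun j => by
        have := hadj j.succ
        simpa using this)
      refine ⟨Walk.cons (by simpa using hadj 0) (p.copy rfl (by simp [Fin.succ_last])), ?_⟩
      rw [wvolt_cons, wvolt_copy, hp, Fin.sum_univ_succ]
      simp

lemma walkToFin (ℓ : V → V → N) {Δ : SimpleGraph V} {x y : V} (p : Δ.Walk x y) :
    ∃ (k : ℕ) (c : Fin (k + 1) → V), c 0 = x ∧ c (Fin.last k) = y ∧
      (∀ j : Fin k, Δ.Adj (c j.castSucc) (c j.succ)) ∧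
      (∑ j : Fin k, ℓ (c j.castSucc) (c j.succ)) = wvolt ℓ p := by
  induction p with
  | nil => exact ⟨0, fun _ => _, rfl, rfl, fun j => j.elim0, by simp⟩
  | cons h p ih =>
      obtain ⟨k, c, hc0, hcl, hadj, hsum⟩ := ih
      refine ⟨k + 1, Fin.cons _ c, Fin.cons_zero _ _, ?_, ?_, ?_⟩
      · rw [← Fin.succ_last, Fin.cons_succ]; exact hcl
      · intro j
        refine Fin.cases ?_ ?_ j
        · simp only [Fin.castSucc_zero, Fin.cons_zero, Fin.cons_succ, hc0]; exact h
        · intro i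
          rw [← Fin.succ_castSucc, Fin.cons_succ, Fin.cons_succ]
          exact hadj i
      · rw [Fin.sum_univ_succ, wvolt_cons, Fin.castSucc_zero, Fin.cons_zero, Fin.cons_succ,
          hc0, ← hsum]
        congr 1

lemma reach_to_walk {Δ : SimpleGraph V} (ℓ : V → V → N)
    (hℓ : ∀ u v, Δ.Adj u v → ℓ u v = - ℓ v u) {P Q : V × N}
    (h : (liftGraphA Δ ℓ hℓ).Reachable P Q) :
    ∃ p : Δ.Walk P.1 Q.1, wvolt ℓ p = P.2 - Q.2 := by
  obtain ⟨w⟩ := h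
  induction w with
  | nil => exact ⟨Walk.nil, by simp⟩
  | cons h' w ih =>
      obtain ⟨p, hp⟩ := ih
      obtain ⟨h1, h2⟩ := h'
      exact ⟨Walk.cons h1 p, by rw [wvolt_cons, hp, h2]; abel⟩

lemma walk_to_reach {Δ : SimpleGraph V} (ℓ : V → V → N)
    (hℓ : ∀ u v, Δ.Adj u v → ℓ u v = - ℓ v u) {x y : V} (p : Δ.Walk x y) :
    ∀ m : N, (liftGraphA Δ ℓ hℓ).Reachable (x, m) (y, m - wvolt ℓ p) := by
  induction p with
  | nil => intro m; simpa using Reachable.refl (G := liftGraphA Δ ℓ hℓ) (_, m)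
  | @cons u x' y' h p ih =>
      intro m
      have e : (liftGraphA Δ ℓ hℓ).Adj (u, m) (x', m - ℓ u x') :=
        ⟨h, by show ℓ u x' = m - (m - ℓ u x'); abel⟩
      have r := ih (m - ℓ u x')
      have heq : m - ℓ u x' - wvolt ℓ p = m - wvolt ℓ (Walk.cons h p) := by
        rw [wvolt_cons]; abel
      exact e.reachable.trans (heq ▸ r)

/-- The subgroup of voltages of closed walks based at `v`. -/
def loopSub (ℓ : V → V → N) (Δ : SimpleGraph V)
    (hℓ : ∀ u v, Δ.Adj u v → ℓ u v = - ℓ v u) (v : V) : AddSubgroup N where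
  carrier := {n | ∃ p : Δ.Walk v v, wvolt ℓ p = n}
  zero_mem' := ⟨Walk.nil, rfl⟩
  add_mem' := by
    rintro _ _ ⟨p, hp⟩ ⟨q, hq⟩
    exact ⟨p.append q, by rw [wvolt_append, hp, hq]⟩
  neg_mem' := by
    rintro _ ⟨p, hp⟩
    exact ⟨p.reverse, by rw [wvolt_reverse ℓ hℓ, hp]⟩

lemma mem_loopSub {ℓ : V → V → N} {Δ : SimpleGraph V}
    {hℓ : ∀ u v, Δ.Adj u v → ℓ u v = - ℓ v u} {v : V} {n : N} :
    n ∈ loopSub ℓ Δ hℓ v ↔ ∃ p : Δ.Walk v v, wvolt ℓ p = n := Iff.rfl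

end VoltAux

/-- with `N` Abelian, every triangle of voltage `0`, `M` the subgroup generated
by voltages of closed walks, and `λ g` the voltage of a chosen path from `v^g` to `v`, the
stabilizer in `G ⋉ N` of the connected component of `(v,0)` is
`H = {(g, λ(g) + m) : g ∈ G, m ∈ M}`, and `H` is an extension of `G` by `M`. -/
theorem stabilizer_of_component_is_extension {V N G : Type*} [AddCommGroup N] [Group G]
    (Δ : SimpleGraph V) (ℓ : V → V → N)
    (hℓ : ∀ u v, Δ.Adj u v → ℓ u v = - ℓ v u)
    (hconn : Δ.Connected)
    -- the right action of G on Δ by graph automorphisms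
    (a : G → Equiv.Perm V) (ha_one : ∀ v, a 1 v = v)
    (ha_mul : ∀ g h v, a (g * h) v = a h (a g v))
    (ha_adj : ∀ g u v, Δ.Adj u v ↔ Δ.Adj (a g u) (a g v))
    -- the right action of G on N by group automorphisms
    (ν : G → N ≃+ N) (hν_one : ∀ n, ν 1 n = n)
    (hν_mul : ∀ g h n, ν (g * h) n = ν h (ν g n))
    -- G-equivariance of the voltage assignment
    (hequiv : ∀ g u v, Δ.Adj u v → ℓ (a g u) (a g v) = ν g (ℓ u v))
    -- every triangle has voltage 0
    (htri : ∀ u v w, Δ.Adj u v → Δ.Adj v w → Δ.Adj w u → ℓ u v + ℓ v w + ℓ w u = 0)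
    -- M, the subgroup of N generated by the voltages of all closed walks
    (M : AddSubgroup N)
    (hM : M = AddSubgroup.closure {n | ∃ (k : ℕ) (c : Fin (k + 1) → V),
        c 0 = c (Fin.last k) ∧ (∀ j : Fin k, Δ.Adj (c j.castSucc) (c j.succ)) ∧
        (∑ j : Fin k, ℓ (c j.castSucc) (c j.succ)) = n})
    -- a base vertex v and, for each g, the voltage lam g of a chosen path from v^g to v
    (v : V) (lam : G → N)
    (hlam : ∀ g, ∃ (k : ℕ) (c : Fin (k + 1) → V),
        c 0 = a g v ∧ c (Fin.last k) = v ∧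
        (∀ j : Fin k, Δ.Adj (c j.castSucc) (c j.succ)) ∧
        (∑ j : Fin k, ℓ (c j.castSucc) (c j.succ)) = lam g)
    -- H, the stabilizer in G ⋉ N of the connected component of (v, 0):
    (H : Set (G × N))
    (hH : H = {x : G × N | (liftGraphA Δ ℓ hℓ).Reachable (v, 0) (a x.1 v, x.2)}) :
    -- H = {(g, λ(g) + m) | g ∈ G, m ∈ M}
    (H = {x : G × N | ∃ m ∈ M, x.2 = lam x.1 + m}) ∧
    -- H is a subgroup of G ⋉ N (with multiplication (g,k)(h,l) = (gh, k^h + l)):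
    ((1, (0 : N)) ∈ H) ∧
    (∀ x ∈ H, ∀ y ∈ H, (x.1 * y.1, ν y.1 x.2 + y.2) ∈ H) ∧
    (∀ x ∈ H, (x.1⁻¹, - ν x.1⁻¹ x.2) ∈ H) ∧
    -- {1} × M is a normal subgroup of H:
    (∀ m ∈ M, ((1 : G), (m : N)) ∈ H) ∧
    ({x ∈ H | x.1 = 1} = {x : G × N | x.1 = 1 ∧ x.2 ∈ M}) ∧
    (∀ x ∈ H, ∀ m ∈ M, ν x.1 m ∈ M) ∧
    -- and the quotient of H by {1} × M is G (projection on the first coordinate is a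
    -- surjective homomorphism with kernel {1} × M):
    (∀ g : G, ∃ n : N, (g, n) ∈ H) := by
  classical
  open VoltAux in
  set Mv := VoltAux.loopSub ℓ Δ hℓ v with hMv
  -- chosen walks realizing `lam`
  have hP : ∀ g : G, ∃ p : Δ.Walk (a g v) v, VoltAux.wvolt ℓ p = lam g := by
    intro g
    obtain ⟨k, c, h0, hl, hadj, hsum⟩ := hlam g
    obtain ⟨p, hp⟩ := VoltAux.finToWalk ℓ k c hadj
    exact ⟨p.copy h0 hl, by rw [VoltAux.wvolt_copy, hp, hsum]⟩
  choose P hPv using hP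
  -- M is the subgroup of voltages of closed walks at v
  have hMeq : ∀ n : N, n ∈ M ↔ n ∈ Mv := by
    intro n
    rw [hM]
    constructor
    · intro hn
      refine (AddSubgroup.closure_le Mv).2 ?_ hn
      rintro m ⟨k, c, hcl, hadj, hsum⟩
      obtain ⟨p, hp⟩ := VoltAux.finToWalk ℓ k c hadj
      obtain ⟨q⟩ := hconn.preconnected v (c 0)
      refine ⟨q.append ((p.copy rfl hcl.symm).append q.reverse), ?_⟩
      rw [VoltAux.wvolt_append, VoltAux.wvolt_append, VoltAux.wvolt_copy, hp, hsum,
        VoltAux.wvolt_reverse ℓ hℓ]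
      abel
    · rintro ⟨p, hp⟩
      apply AddSubgroup.subset_closure
      obtain ⟨k, c, h0, hl, hadj, hsum⟩ := VoltAux.walkToFin ℓ p
      exact ⟨k, c, by rw [h0, hl], hadj, by rw [hsum, hp]⟩
  -- membership in H
  have hHmem : ∀ (g : G) (n : N), ((g, n) ∈ H) ↔ n - lam g ∈ Mv := by
    intro g n
    rw [hH]
    simp only [Set.mem_setOf_eq]
    constructor
    · intro hreach
      obtain ⟨p, hp⟩ := VoltAux.reach_to_walk ℓ hℓ hreach
      have h1 : ((0 : N) - n + lam g) ∈ Mv :=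
        ⟨p.append (P g), by rw [VoltAux.wvolt_append, hp, hPv]⟩
      have h2 := Mv.neg_mem h1
      have e : n - lam g = -((0 : N) - n + lam g) := by abel
      rw [e]; exact h2
    · intro hm
      obtain ⟨q, hq⟩ := hm
      have r := VoltAux.walk_to_reach ℓ hℓ (q.reverse.append (P g).reverse) 0
      have e : (0 : N) - VoltAux.wvolt ℓ (q.reverse.append (P g).reverse) = n := by
        rw [VoltAux.wvolt_append, VoltAux.wvolt_reverse ℓ hℓ, VoltAux.wvolt_reverse ℓ hℓ,
          hq, hPv]
        abel
      exact e ▸ r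
  -- graph homomorphisms
  have hνMv : ∀ (g : G), ∀ m ∈ Mv, ν g m ∈ Mv := by
    rintro g m ⟨p, hp⟩
    let f : Δ →g Δ := ⟨a g, fun h => (ha_adj g _ _).mp h⟩
    refine ⟨(P g).reverse.append ((p.map f).append (P g)), ?_⟩
    rw [VoltAux.wvolt_append, VoltAux.wvolt_append, VoltAux.wvolt_reverse ℓ hℓ, hPv,
      VoltAux.wvolt_map ℓ f (ν g) (fun x y h => hequiv g x y h), hp]
    abel
  have hlam1 : lam 1 ∈ Mv := ⟨(P 1).copy (ha_one v) rfl, by rw [VoltAux.wvolt_copy, hPv]⟩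
  have hlamMul : ∀ g h : G, ν h (lam g) + lam h - lam (g * h) ∈ Mv := by
    intro g h
    let f : Δ →g Δ := ⟨a h, fun hx => (ha_adj h _ _).mp hx⟩
    refine ⟨(P (g * h)).reverse.append
      ((((P g).map f).copy (ha_mul g h v).symm rfl).append (P h)), ?_⟩
    rw [VoltAux.wvolt_append, VoltAux.wvolt_append, VoltAux.wvolt_reverse ℓ hℓ,
      VoltAux.wvolt_copy, VoltAux.wvolt_map ℓ f (ν h) (fun x y hx => hequiv h x y hx),
      hPv, hPv, hPv]
    abel
  have hlamInv : ∀ g : G, ν g⁻¹ (lam g) + lam g⁻¹ ∈ Mv := by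
    intro g
    let f : Δ →g Δ := ⟨a g⁻¹, fun hx => (ha_adj g⁻¹ _ _).mp hx⟩
    have e : a g⁻¹ (a g v) = v := by rw [← ha_mul, mul_inv_cancel, ha_one]
    refine ⟨(((P g).map f).copy e rfl).append (P g⁻¹), ?_⟩
    rw [VoltAux.wvolt_append, VoltAux.wvolt_copy,
      VoltAux.wvolt_map ℓ f (ν g⁻¹) (fun x y hx => hequiv g⁻¹ x y hx), hPv, hPv]
  refine ⟨?_, ?_, ?_, ?_, ?_, ?_, ?_, ?_⟩
  · ext ⟨g, n⟩
    rw [hHmem]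
    simp only [Set.mem_setOf_eq]
    constructor
    · intro hm
      exact ⟨n - lam g, (hMeq _).2 hm, by abel⟩
    · rintro ⟨m, hmM, rfl⟩
      have hmv := (hMeq m).1 hmM
      have e : lam g + m - lam g = m := by abel
      rw [e]; exact hmv
  · refine (hHmem 1 0).2 ?_
    have := Mv.neg_mem hlam1
    rw [zero_sub]; exact this
  · rintro ⟨g, k⟩ hx ⟨h, l⟩ hy
    rw [hHmem] at hx hy
    refine (hHmem _ _).2 ?_
    have h1 := hνMv h _ hx
    have h3 := hlamMul g h
    have hmem := Mv.add_mem (Mv.add_mem h1 hy) h3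
    have e : ν h k + l - lam (g * h)
        = ν h (k - lam g) + (l - lam h) + (ν h (lam g) + lam h - lam (g * h)) := by
      rw [map_sub]; abel
    rw [e]; exact hmem
  · rintro ⟨g, k⟩ hx
    rw [hHmem] at hx
    refine (hHmem _ _).2 ?_
    have h1 := Mv.neg_mem (hνMv g⁻¹ _ hx)
    have h2 := Mv.neg_mem (hlamInv g)
    have hmem := Mv.add_mem h1 h2
    have e : -(ν g⁻¹) k - lam g⁻¹
        = -((ν g⁻¹) (k - lam g)) + -((ν g⁻¹) (lam g) + lam g⁻¹) := by
      rw [map_sub]; abel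
    rw [e]; exact hmem
  · intro m hm
    exact (hHmem 1 m).2 (Mv.sub_mem ((hMeq m).1 hm) hlam1)
  · ext ⟨g, n⟩
    simp only [Set.mem_setOf_eq, Set.mem_sep_iff]
    constructor
    · rintro ⟨hxH, hg⟩
      subst hg
      refine ⟨rfl, ?_⟩
      rw [hHmem] at hxH
      rw [hMeq]
      have := Mv.add_mem hxH hlam1
      have e : n - lam 1 + lam 1 = n := by abel
      rw [e] at this; exact this
    · rintro ⟨hg, hnM⟩
      subst hg
      exact ⟨(hHmem 1 n).2 (Mv.sub_mem ((hMeq n).1 hnM) hlam1), rfl⟩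
  · rintro ⟨g, k⟩ _ m hm
    exact (hMeq _).2 (hνMv g m ((hMeq m).1 hm))
  · intro g
    refine ⟨lam g, (hHmem g (lam g)).2 ?_⟩
    rw [sub_self]; exact Mv.zero_mem
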